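/- Let m ≤ n be positive integers, let α : [n] → [0,1] satisfy α_1 > α_2 > ⋯ > α_m > α_{m+1} ≥ ⋯ ≥ α_n, and let β : [m+1] → [0,1] satisfy β_1 > β_2 > ⋯ > β_m > β_{m+1} = 0. Define Δ_{i,j} = (β_j − β_{j+1})(α_j − α_i) if j < i, Δ_{i,j} = 0 if j = i, and Δ_{i,j} = (β_{j−1} − β_j)(α_i − α_j) if j > i. Then for any injective sequence i_1, …, i_m of elements of [n], ∑_{j=1}^m (α_j β_j − α_{i_j} β_j) ≥ (1/2) ∑_{j=1}^m Δ_{i_j, j}. -/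

import Mathlib

open Finset


private lemma pbm_telesc (f : ℕ → ℝ) : ∀ b a : ℕ, a ≤ b + 1 →
    ∑ k ∈ Icc a b, (f k - f (k+1)) = f a - f (b+1) := by
  intro b
  induction b with
  | zero =>
    intro a ha
    interval_cases a
    · simp
    · rw [Finset.Icc_eq_empty (by omega)]; simp
  | succ b ih =>
    intro a ha
    rcases Nat.lt_or_ge a (b+2) with h | h
    · have ha' : a ≤ b + 1 := by omega
      rw [Finset.sum_Icc_succ_top ha', ih a ha']
      ring
    · have : a = b + 2 := by omega
      subst this
      rw [Finset.Icc_eq_empty (by omega)]; simp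

private lemma pbm_sum_bound (D E : Finset ℕ) (f : ℕ → ℝ) (c c' : ℝ)
    (hcard : D.card = E.card) (hcc : c' ≤ c)
    (hD : ∀ x ∈ D, c ≤ f x) (hE : ∀ y ∈ E, f y ≤ c')
    (p : ℕ) (hp : p ∈ D) (q : ℕ) (hq : q ∈ E) :
    f p - f q ≤ ∑ i ∈ D, f i - ∑ i ∈ E, f i := by
  have h1 : (D.erase p).card • c ≤ ∑ i ∈ D.erase p, f i :=
    Finset.card_nsmul_le_sum _ _ _ (fun x hx => hD x (Finset.mem_of_mem_erase hx))
  have h2 : ∑ i ∈ E.erase q, f i ≤ (E.erase q).card • c' :=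
    Finset.sum_le_card_nsmul _ _ _ (fun x hx => hE x (Finset.mem_of_mem_erase hx))
  have hd : f p + ∑ i ∈ D.erase p, f i = ∑ i ∈ D, f i := Finset.add_sum_erase D f hp
  have he : f q + ∑ i ∈ E.erase q, f i = ∑ i ∈ E, f i := Finset.add_sum_erase E f hq
  have hc : (D.erase p).card = (E.erase q).card := by
    rw [Finset.card_erase_of_mem hp, Finset.card_erase_of_mem hq, hcard]
  simp only [nsmul_eq_mul] at h1 h2
  rw [hc] at h1
  have h3 : ((E.erase q).card : ℝ) * c' ≤ ((E.erase q).card : ℝ) * c :=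
    mul_le_mul_of_nonneg_left hcc (Nat.cast_nonneg _)
  linarith

private lemma pbm_sum_bound0 (D E : Finset ℕ) (f : ℕ → ℝ) (c c' : ℝ)
    (hcard : D.card = E.card) (hcc : c' ≤ c)
    (hD : ∀ x ∈ D, c ≤ f x) (hE : ∀ y ∈ E, f y ≤ c') :
    0 ≤ ∑ i ∈ D, f i - ∑ i ∈ E, f i := by
  have h1 := Finset.card_nsmul_le_sum D f c hD
  have h2 := Finset.sum_le_card_nsmul E f c' hE
  simp only [nsmul_eq_mul] at h1 h2
  have h3 : (E.card : ℝ) * c' ≤ (D.card : ℝ) * c := by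
    rw [hcard]; exact mul_le_mul_of_nonneg_left hcc (Nat.cast_nonneg _)
  linarith

private lemma pbm_anti (f : ℕ → ℝ) (N : ℕ) (h : ∀ i, 1 ≤ i → i < N → f (i+1) ≤ f i) :
    ∀ j i, 1 ≤ i → i ≤ j → j ≤ N → f j ≤ f i := by
  intro j
  induction j with
  | zero => intro i h1 h2 _; omega
  | succ j ih =>
    intro i h1 h2 h3
    rcases Nat.lt_or_ge i (j+1) with hlt | hge
    · exact le_trans (h j (by omega) (by omega)) (ih i h1 (by omega) (by omega))
    · have : i = j + 1 := by omega
      subst this; exact le_refl _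

private lemma pbm_swap (m : ℕ) (F : ℕ → ℕ → ℝ) :
    ∑ j ∈ Icc 1 m, ∑ k ∈ Icc j m, F j k = ∑ k ∈ Icc 1 m, ∑ j ∈ Icc 1 k, F j k := by
  have h1 : ∀ j ∈ Icc 1 m, ∑ k ∈ Icc j m, F j k = ∑ k ∈ Icc 1 m, if j ≤ k then F j k else 0 := by
    intro j hj
    rw [← Finset.sum_filter]
    congr 1
    ext x
    simp only [Finset.mem_filter, Finset.mem_Icc] at *
    omega
  rw [Finset.sum_congr rfl h1, Finset.sum_comm]
  apply Finset.sum_congr rfl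
  intro k hk
  rw [← Finset.sum_filter]
  congr 1
  ext x
  simp only [Finset.mem_filter, Finset.mem_Icc] at *
  omega

private lemma pbm_shift (m : ℕ) (g : ℕ → ℝ) (hg : g 1 = 0) (hm : 1 ≤ m) :
    ∑ j ∈ Icc 1 m, g j = ∑ k ∈ Icc 1 m, if k < m then g (k+1) else 0 := by
  rw [← Finset.sum_filter]
  have h1 : (Icc 1 m).filter (fun k => k < m) = Icc 1 (m-1) := by
    ext x; simp only [Finset.mem_filter, Finset.mem_Icc]; omega
  rw [h1]
  have h2 : Icc 2 m = Finset.map (addRightEmbedding 1) (Icc 1 (m-1)) := by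
    rw [Finset.map_add_right_Icc]
    congr 1 <;> omega
  have h3 : ∑ k ∈ Icc 1 (m-1), g (k+1) = ∑ j ∈ Icc 2 m, g j := by
    rw [h2, Finset.sum_map]
    simp [addRightEmbedding_apply]
  rw [h3]
  have h4 : Icc 1 m = insert 1 (Icc 2 m) := by
    ext x; simp only [Finset.mem_insert, Finset.mem_Icc]; omega
  rw [h4, Finset.sum_insert (by simp [Finset.mem_Icc]), hg, zero_add]

/-- Self-bounding lemma for PBM: for any injective placement `σ` of items into
positions `1..m`, the instantaneous regret dominates half the sum of gaps. -/
theorem pbm_self_bounding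
    (n m : ℕ) (hm : 1 ≤ m) (hmn : m ≤ n)
    (α β : ℕ → ℝ)
    (hα01 : ∀ i ∈ Finset.Icc 1 n, α i ∈ Set.Icc (0:ℝ) 1)
    (hαstrict : ∀ i, 1 ≤ i → i ≤ m → α i > α (i + 1))
    (hαmono : ∀ i, m + 1 ≤ i → i < n → α i ≥ α (i + 1))
    (hβ01 : ∀ j ∈ Finset.Icc 1 (m + 1), β j ∈ Set.Icc (0:ℝ) 1)
    (hβstrict : ∀ j, 1 ≤ j → j ≤ m → β j > β (j + 1))
    (hβlast : β (m + 1) = 0)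
    (Δ : ℕ → ℕ → ℝ)
    (hΔ : ∀ i j, Δ i j =
      if j < i then (β j - β (j + 1)) * (α j - α i)
      else if j = i then 0
      else (β (j - 1) - β j) * (α i - α j))
    (σ : ℕ → ℕ)
    (hσinj : Set.InjOn σ (Finset.Icc 1 m))
    (hσrange : ∀ j ∈ Finset.Icc 1 m, σ j ∈ Finset.Icc 1 n) :
    ∑ j ∈ Finset.Icc 1 m, (α j * β j - α (σ j) * β j)
      ≥ (1 / 2) * ∑ j ∈ Finset.Icc 1 m, Δ (σ j) j := by
  -- basic monotonicity facts
  have hstep : ∀ i, 1 ≤ i → i < n → α (i+1) ≤ α i := by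
    intro i h1 h2
    rcases Nat.lt_or_ge m i with h | h
    · exact hαmono i (by omega) h2
    · exact (hαstrict i h1 h).le
  have hanti : ∀ i j, 1 ≤ i → i ≤ j → j ≤ n → α j ≤ α i :=
    fun i j h1 h2 h3 => pbm_anti α n hstep j i h1 h2 h3
  have hβd : ∀ k, 1 ≤ k → k ≤ m → 0 ≤ β k - β (k+1) := by
    intro k h1 h2; linarith [hβstrict k h1 h2]
  have hinj : ∀ a ∈ Icc 1 m, ∀ b ∈ Icc 1 m, σ a = σ b → a = b :=
    fun a ha b hb h => hσinj (Finset.mem_coe.mpr ha) (Finset.mem_coe.mpr hb) h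
  have hσlb : ∀ j ∈ Icc 1 m, 1 ≤ σ j ∧ σ j ≤ n := by
    intro j hj
    have := hσrange j hj
    rw [Finset.mem_Icc] at this
    exact this
  -- combinatorial facts about the image of an initial segment
  have hinjk : ∀ k, k ≤ m → ∀ a ∈ Icc 1 k, ∀ b ∈ Icc 1 k, σ a = σ b → a = b := by
    intro k hk a ha b hb h
    have hsub : Icc 1 k ⊆ Icc 1 m := Finset.Icc_subset_Icc le_rfl hk
    exact hinj a (hsub ha) b (hsub hb) h
  have hSrepr : ∀ k, 1 ≤ k → k ≤ m → ∑ j ∈ Icc 1 k, (α j - α (σ j)) =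
      ∑ i ∈ Icc 1 k \ (Icc 1 k).image σ, α i
      - ∑ i ∈ (Icc 1 k).image σ \ Icc 1 k, α i := by
    intro k h1 h2
    rw [Finset.sum_sub_distrib, ← Finset.sum_image (hinjk k h2)]
    have e1 := Finset.sum_inter_add_sum_sdiff (Icc 1 k) ((Icc 1 k).image σ) α
    have e2 := Finset.sum_inter_add_sum_sdiff ((Icc 1 k).image σ) (Icc 1 k) α
    rw [Finset.inter_comm] at e2
    linarith
  have hDE : ∀ k, 1 ≤ k → k ≤ m →
      (Icc 1 k \ (Icc 1 k).image σ).card = ((Icc 1 k).image σ \ Icc 1 k).card := by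
    intro k h1 h2
    have hcT : ((Icc 1 k).image σ).card = (Icc 1 k).card :=
      Finset.card_image_of_injOn (fun a ha b hb h =>
        hinjk k h2 a (Finset.mem_coe.mp ha) b (Finset.mem_coe.mp hb) h)
    have h3 := Finset.card_sdiff_add_card_inter (Icc 1 k) ((Icc 1 k).image σ)
    have h4 := Finset.card_sdiff_add_card_inter ((Icc 1 k).image σ) (Icc 1 k)
    rw [Finset.inter_comm] at h4
    omega
  have hDmem : ∀ k, k ≤ m → ∀ x ∈ Icc 1 k \ (Icc 1 k).image σ, α k ≤ α x := by
    intro k hk x hx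
    rw [Finset.mem_sdiff, Finset.mem_Icc] at hx
    exact hanti x k hx.1.1 hx.1.2 (by omega)
  have hEmem : ∀ k, k ≤ m → ∀ y ∈ (Icc 1 k).image σ \ Icc 1 k, α y ≤ α (k+1) := by
    intro k hk y hy
    rw [Finset.mem_sdiff] at hy
    obtain ⟨j, hj, hjy⟩ := Finset.mem_image.mp hy.1
    rw [Finset.mem_Icc] at hj
    have hjn := hσlb j (Finset.mem_Icc.mpr ⟨hj.1, by omega⟩)
    have hy2 : ¬ (1 ≤ y ∧ y ≤ k) := by
      simpa [Finset.mem_Icc] using hy.2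
    have hyk : k + 1 ≤ y := by omega
    exact hanti (k+1) y (by omega) hyk (by omega)
  -- the three key bounds on the partial sums S k
  have hS0 : ∀ k, 1 ≤ k → k ≤ m → 0 ≤ ∑ j ∈ Icc 1 k, (α j - α (σ j)) := by
    intro k h1 h2
    rw [hSrepr k h1 h2]
    exact pbm_sum_bound0 _ _ α (α k) (α (k+1)) (hDE k h1 h2)
      (hαstrict k h1 h2).le (hDmem k h2) (hEmem k h2)
  have hB1 : ∀ k, 1 ≤ k → k ≤ m → k < σ k →
      α k - α (σ k) ≤ ∑ j ∈ Icc 1 k, (α j - α (σ j)) := by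
    intro k h1 h2 h3
    rw [hSrepr k h1 h2]
    have hq : σ k ∈ (Icc 1 k).image σ \ Icc 1 k := by
      rw [Finset.mem_sdiff, Finset.mem_Icc]
      exact ⟨Finset.mem_image_of_mem σ (Finset.mem_Icc.mpr ⟨h1, le_rfl⟩), by omega⟩
    obtain ⟨p, hp⟩ := Finset.card_pos.mp (by
      rw [hDE k h1 h2]; exact Finset.card_pos.mpr ⟨σ k, hq⟩)
    have := pbm_sum_bound _ _ α (α k) (α (k+1)) (hDE k h1 h2)
      (hαstrict k h1 h2).le (hDmem k h2) (hEmem k h2) p hp (σ k) hq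
    have hpk := hDmem k h2 p hp
    linarith
  have hB2 : ∀ k, 1 ≤ k → k < m → σ (k+1) < k+1 →
      α (σ (k+1)) - α (k+1) ≤ ∑ j ∈ Icc 1 k, (α j - α (σ j)) := by
    intro k h1 h2 h3
    rw [hSrepr k h1 (by omega)]
    have hk1m : (k+1) ∈ Icc 1 m := Finset.mem_Icc.mpr ⟨by omega, by omega⟩
    have hσk1 := hσlb (k+1) hk1m
    have hp : σ (k+1) ∈ Icc 1 k \ (Icc 1 k).image σ := by
      rw [Finset.mem_sdiff, Finset.mem_Icc]
      refine ⟨⟨hσk1.1, by omega⟩, ?_⟩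
      intro hmem
      obtain ⟨j, hj, hjy⟩ := Finset.mem_image.mp hmem
      rw [Finset.mem_Icc] at hj
      have : j = k + 1 := hinj j (Finset.mem_Icc.mpr ⟨hj.1, by omega⟩) (k+1) hk1m hjy
      omega
    obtain ⟨q, hq⟩ := Finset.card_pos.mp (by
      rw [← hDE k h1 (by omega)]; exact Finset.card_pos.mpr ⟨σ (k+1), hp⟩)
    have := pbm_sum_bound _ _ α (α k) (α (k+1)) (hDE k h1 (by omega))
      (hαstrict k h1 (by omega)).le (hDmem k (by omega)) (hEmem k (by omega))
      (σ (k+1)) hp q hq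
    have hqk := hEmem k (by omega) q hq
    linarith
  -- Abel summation: regret = ∑_k d_k S_k
  have habel : ∑ j ∈ Icc 1 m, (α j * β j - α (σ j) * β j)
      = ∑ k ∈ Icc 1 m, (β k - β (k+1)) * ∑ j ∈ Icc 1 k, (α j - α (σ j)) := by
    have h1 : ∀ j ∈ Icc 1 m, α j * β j - α (σ j) * β j
        = ∑ k ∈ Icc j m, (α j - α (σ j)) * (β k - β (k+1)) := by
      intro j hj
      rw [Finset.mem_Icc] at hj
      rw [← Finset.mul_sum, pbm_telesc β m j (by omega), hβlast]
      ring
    rw [Finset.sum_congr rfl h1, pbm_swap m (fun j k => (α j - α (σ j)) * (β k - β (k+1)))]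
    apply Finset.sum_congr rfl
    intro k _
    rw [Finset.mul_sum]
    apply Finset.sum_congr rfl
    intro j _
    ring
  -- decomposition of the gaps
  have hΔdec : ∀ j, 1 ≤ j → j ≤ m → Δ (σ j) j =
      (β j - β (j+1)) * (if j < σ j then α j - α (σ j) else 0)
      + (if σ j < j then (β (j-1) - β j) * (α (σ j) - α j) else 0) := by
    intro j h1 h2
    simp only [hΔ]
    split_ifs <;> first | omega | (exfalso; omega) | ring
  have hsplit : ∑ j ∈ Icc 1 m, Δ (σ j) j
      = ∑ j ∈ Icc 1 m, (β j - β (j+1)) * (if j < σ j then α j - α (σ j) else 0)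
      + ∑ j ∈ Icc 1 m, (if σ j < j then (β (j-1) - β j) * (α (σ j) - α j) else 0) := by
    rw [← Finset.sum_add_distrib]
    apply Finset.sum_congr rfl
    intro j hj
    rw [Finset.mem_Icc] at hj
    exact hΔdec j hj.1 hj.2
  -- shift the second sum
  have hg1 : (if σ 1 < 1 then (β (1-1) - β 1) * (α (σ 1) - α 1) else 0) = 0 := by
    have := hσlb 1 (Finset.mem_Icc.mpr ⟨le_rfl, hm⟩)
    rw [if_neg (by omega)]
  have hshift : ∑ j ∈ Icc 1 m, (if σ j < j then (β (j-1) - β j) * (α (σ j) - α j) else 0)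
      = ∑ k ∈ Icc 1 m, if k < m then
          (if σ (k+1) < k+1 then (β k - β (k+1)) * (α (σ (k+1)) - α (k+1)) else 0) else 0 := by
    rw [pbm_shift m (fun j => if σ j < j then (β (j-1) - β j) * (α (σ j) - α j) else 0) hg1 hm]
    apply Finset.sum_congr rfl
    intro k _
    congr 1
  -- bound each piece by the regret
  have hA : ∑ j ∈ Icc 1 m, (β j - β (j+1)) * (if j < σ j then α j - α (σ j) else 0)
      ≤ ∑ k ∈ Icc 1 m, (β k - β (k+1)) * ∑ j ∈ Icc 1 k, (α j - α (σ j)) := by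
    apply Finset.sum_le_sum
    intro k hk
    rw [Finset.mem_Icc] at hk
    by_cases h : k < σ k
    · rw [if_pos h]
      exact mul_le_mul_of_nonneg_left (hB1 k hk.1 hk.2 h) (hβd k hk.1 hk.2)
    · rw [if_neg h, mul_zero]
      exact mul_nonneg (hβd k hk.1 hk.2) (hS0 k hk.1 hk.2)
  have hB : ∑ k ∈ Icc 1 m, (if k < m then
          (if σ (k+1) < k+1 then (β k - β (k+1)) * (α (σ (k+1)) - α (k+1)) else 0) else 0)
      ≤ ∑ k ∈ Icc 1 m, (β k - β (k+1)) * ∑ j ∈ Icc 1 k, (α j - α (σ j)) := by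
    apply Finset.sum_le_sum
    intro k hk
    rw [Finset.mem_Icc] at hk
    have hnn : 0 ≤ (β k - β (k+1)) * ∑ j ∈ Icc 1 k, (α j - α (σ j)) :=
      mul_nonneg (hβd k hk.1 hk.2) (hS0 k hk.1 hk.2)
    by_cases h : k < m
    · rw [if_pos h]
      by_cases h2 : σ (k+1) < k+1
      · rw [if_pos h2]
        exact mul_le_mul_of_nonneg_left (hB2 k hk.1 h h2) (hβd k hk.1 hk.2)
      · rw [if_neg h2]; exact hnn
    · rw [if_neg h]; exact hnn
  rw [ge_iff_le, habel, hsplit, hshift]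
  linarith
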